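/- For every pair of integers q > r ≥ 1, there exists a real number α ∈ [0,1] such that log₂(f_{q,r}(N)) / log₂(N) tends to α as N → ∞; that is, f_{q,r}(N) = N^{α + o(1)}. -/

import Mathlib

/-- A monotone path of length `ℓ` (number of vertices) in the `q`-edge-colored complete
graph on `[N]` given by `χ`, all of whose edge colors lie in `S`. -/
def HasMonoPath (q N : ℕ) (χ : Fin N → Fin N → Fin q) (S : Finset (Fin q)) (ℓ : ℕ) : Prop :=
  ∃ v : Fin ℓ → Fin N, StrictMono v ∧
    ∀ i j : Fin ℓ, (i : ℕ) + 1 = (j : ℕ) → χ (v i) (v j) ∈ S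

/-- The maximum length of a monotone path using at most `r` colors in the coloring `χ`. -/
noncomputable def maxMonoLen (q r N : ℕ) (χ : Fin N → Fin N → Fin q) : ℕ :=
  sSup {ℓ : ℕ | ∃ S : Finset (Fin q), S.card ≤ r ∧ HasMonoPath q N χ S ℓ}

/-- `fqr q r N` : the minimum over `q`-edge-colorings of the complete graph on `[N]` of the
maximum length of a monotone path using at most `r` colors. -/
noncomputable def fqr (q r N : ℕ) : ℕ :=
  sInf {L : ℕ | ∃ χ : Fin N → Fin N → Fin q, L = maxMonoLen q r N χ}

lemma hasMonoPath_le {q N ℓ : ℕ} {χ : Fin N → Fin N → Fin q} {S : Finset (Fin q)}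
    (h : HasMonoPath q N χ S ℓ) : ℓ ≤ N := by
  obtain ⟨v, hv, -⟩ := h
  simpa using Fintype.card_le_of_injective v hv.injective

lemma bddAbove_pathSet (q r N : ℕ) (χ : Fin N → Fin N → Fin q) :
    BddAbove {ℓ : ℕ | ∃ S : Finset (Fin q), S.card ≤ r ∧ HasMonoPath q N χ S ℓ} :=
  ⟨N, fun _ ⟨_, _, h⟩ => hasMonoPath_le h⟩

lemma zero_mem_pathSet (q r N : ℕ) (χ : Fin N → Fin N → Fin q) :
    0 ∈ {ℓ : ℕ | ∃ S : Finset (Fin q), S.card ≤ r ∧ HasMonoPath q N χ S ℓ} :=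
  ⟨∅, by simp, Fin.elim0, fun i => i.elim0, fun i => i.elim0⟩

lemma maxMonoLen_le (q r N : ℕ) (χ : Fin N → Fin N → Fin q) : maxMonoLen q r N χ ≤ N :=
  csSup_le ⟨0, zero_mem_pathSet q r N χ⟩ fun _ ⟨_, _, h⟩ => hasMonoPath_le h

lemma le_maxMonoLen {q r N ℓ : ℕ} {χ : Fin N → Fin N → Fin q} {S : Finset (Fin q)}
    (hS : S.card ≤ r) (h : HasMonoPath q N χ S ℓ) : ℓ ≤ maxMonoLen q r N χ :=
  le_csSup (bddAbove_pathSet q r N χ) ⟨S, hS, h⟩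

lemma two_le_maxMonoLen {q r N : ℕ} (hr : 1 ≤ r) (hN : 2 ≤ N) (χ : Fin N → Fin N → Fin q) :
    2 ≤ maxMonoLen q r N χ := by
  have h0 : (0 : ℕ) < N := by omega
  have h1 : (1 : ℕ) < N := by omega
  refine le_maxMonoLen (S := {χ ⟨0, h0⟩ ⟨1, h1⟩}) (by simpa using hr) ?_
  refine ⟨fun i => if (i : ℕ) = 0 then ⟨0, h0⟩ else ⟨1, h1⟩, ?_, ?_⟩
  · intro i j hij
    fin_cases i <;> fin_cases j <;> simp_all <;> omega
  · intro i j hij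
    fin_cases i <;> fin_cases j <;> simp_all

lemma one_le_maxMonoLen {q r N : ℕ} (hN : 1 ≤ N) (χ : Fin N → Fin N → Fin q) :
    1 ≤ maxMonoLen q r N χ := by
  refine le_maxMonoLen (S := ∅) (by simp) ?_
  exact ⟨fun _ => ⟨0, hN⟩, fun i j h => by omega, fun i j hij => by omega⟩

lemma fqr_nonempty (q r N : ℕ) (hq : 0 < q) :
    {L : ℕ | ∃ χ : Fin N → Fin N → Fin q, L = maxMonoLen q r N χ}.Nonempty :=
  ⟨_, fun _ _ => ⟨0, hq⟩, rfl⟩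

lemma fqr_spec (q r N : ℕ) (hq : 0 < q) :
    ∃ χ : Fin N → Fin N → Fin q, fqr q r N = maxMonoLen q r N χ :=
  Nat.sInf_mem (fqr_nonempty q r N hq)

lemma fqr_le (q r N : ℕ) (χ : Fin N → Fin N → Fin q) : fqr q r N ≤ maxMonoLen q r N χ :=
  Nat.sInf_le ⟨χ, rfl⟩

lemma fqr_le_self (q r N : ℕ) (hq : 0 < q) : fqr q r N ≤ N := by
  obtain ⟨χ, hχ⟩ := fqr_spec q r N hq
  exact hχ ▸ maxMonoLen_le q r N χ

lemma two_le_fqr {q r N : ℕ} (hr : 1 ≤ r) (hq : 0 < q) (hN : 2 ≤ N) : 2 ≤ fqr q r N := by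
  obtain ⟨χ, hχ⟩ := fqr_spec q r N hq
  exact hχ ▸ two_le_maxMonoLen hr hN χ

lemma one_le_fqr {q r N : ℕ} (hq : 0 < q) (hN : 1 ≤ N) : 1 ≤ fqr q r N := by
  obtain ⟨χ, hχ⟩ := fqr_spec q r N hq
  exact hχ ▸ one_le_maxMonoLen hN χ

lemma fqr_mono (q r : ℕ) (hq : 0 < q) : Monotone (fqr q r) := by
  intro N N' hNN
  obtain ⟨χ', hχ'⟩ := fqr_spec q r N' hq
  rw [hχ']
  refine le_trans (fqr_le q r N fun i j => χ' (Fin.castLE hNN i) (Fin.castLE hNN j)) ?_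
  refine csSup_le_csSup (bddAbove_pathSet q r N' χ') ⟨0, zero_mem_pathSet _ _ _ _⟩ ?_
  rintro ℓ ⟨S, hS, v, hv, hc⟩
  refine ⟨S, hS, fun i => Fin.castLE hNN (v i), fun i j h => ?_, hc⟩
  simp only [Fin.lt_def, Fin.coe_castLE]
  exact hv h

lemma key (q r M N : ℕ) (hN : 0 < N)
    (χM : Fin M → Fin M → Fin q) (χN : Fin N → Fin N → Fin q) :
    ∃ χ : Fin (M*N) → Fin (M*N) → Fin q,
      maxMonoLen q r (M*N) χ ≤ maxMonoLen q r M χM * maxMonoLen q r N χN := by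
  have hdiv : ∀ k : Fin (M*N), (k:ℕ)/N < M := fun k =>
    (Nat.div_lt_iff_lt_mul hN).mpr (by have := k.isLt; omega)
  refine ⟨fun k k' => if (k:ℕ)/N = (k':ℕ)/N
      then χN ⟨(k:ℕ)%N, Nat.mod_lt _ hN⟩ ⟨(k':ℕ)%N, Nat.mod_lt _ hN⟩
      else χM ⟨(k:ℕ)/N, hdiv k⟩ ⟨(k':ℕ)/N, hdiv k'⟩, ?_⟩
  set a := maxMonoLen q r M χM with ha
  set b := maxMonoLen q r N χN with hb
  refine csSup_le ⟨0, zero_mem_pathSet _ _ _ _⟩ ?_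
  rintro ℓ ⟨S, hS, v, hv, hc⟩
  simp only at hc
  set B : Fin ℓ → ℕ := fun i => (v i : ℕ) / N with hB
  have hBmono : Monotone B := fun i j hij => Nat.div_le_div_right (hv.monotone hij)
  set D : Finset ℕ := Finset.image B Finset.univ with hD
  -- Step 1: each fiber has size ≤ b
  have fiber_card : ∀ c : ℕ, (Finset.univ.filter (fun i => B i = c)).card ≤ b := by
    intro c
    set F := Finset.univ.filter (fun i => B i = c) with hF
    rcases F.eq_empty_or_nonempty with h | h
    · simp [h]
    · set lo := F.min' h with hlo
      set hi := F.max' h with hhi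
      have hmemF : ∀ i : Fin ℓ, i ∈ F ↔ B i = c := by
        intro i; simp [hF]
      have hBlo : B lo = c := (hmemF lo).mp (F.min'_mem h)
      have hBhi : B hi = c := (hmemF hi).mp (F.max'_mem h)
      have hlohi : (lo:ℕ) ≤ (hi:ℕ) := F.min'_le hi (F.max'_mem h)
      set t := (hi:ℕ) + 1 - (lo:ℕ) with ht
      have hmemIdx : ∀ j : ℕ, j < t → (lo:ℕ) + j < ℓ := by
        intro j hj; have := hi.isLt; omega
      have hBmid : ∀ (j : ℕ) (hj : j < t), B ⟨(lo:ℕ)+j, hmemIdx j hj⟩ = c := by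
        intro j hj
        have h1 : lo ≤ (⟨(lo:ℕ)+j, hmemIdx j hj⟩ : Fin ℓ) := by
          simp [Fin.le_def]
        have h2 : (⟨(lo:ℕ)+j, hmemIdx j hj⟩ : Fin ℓ) ≤ hi := by
          simp only [Fin.le_def]; omega
        have e1 := hBmono h1
        have e2 := hBmono h2
        omega
      have hcard : F.card ≤ t := by
        have hsub : F ⊆ Finset.Icc lo hi := by
          intro i hi'
          simp only [Finset.mem_Icc]
          exact ⟨F.min'_le i hi', F.le_max' i hi'⟩
        calc F.card ≤ (Finset.Icc lo hi).card := Finset.card_le_card hsub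
          _ = t := by rw [Fin.card_Icc]
      refine hcard.trans (le_maxMonoLen (q := q) (r := r) hS ?_)
      refine ⟨fun j => ⟨(v ⟨(lo:ℕ)+(j:ℕ), hmemIdx j j.isLt⟩ : ℕ) % N, Nat.mod_lt _ hN⟩,
        ?_, ?_⟩
      · intro j j' hjj
        simp only [Fin.lt_def]
        have hvlt : (v ⟨(lo:ℕ)+(j:ℕ), hmemIdx j j.isLt⟩ : ℕ)
            < (v ⟨(lo:ℕ)+(j':ℕ), hmemIdx j' j'.isLt⟩ : ℕ) := by
          apply hv
          simp only [Fin.lt_def]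
          exact Nat.add_lt_add_left hjj _
        have hb1 := hBmid j j.isLt
        have hb2 := hBmid j' j'.isLt
        simp only [hB] at hb1 hb2
        obtain ⟨P, e1, e2⟩ : ∃ P : ℕ,
            P + (v ⟨(lo:ℕ)+(j:ℕ), hmemIdx j j.isLt⟩ : ℕ) % N
              = (v ⟨(lo:ℕ)+(j:ℕ), hmemIdx j j.isLt⟩ : ℕ) ∧
            P + (v ⟨(lo:ℕ)+(j':ℕ), hmemIdx j' j'.isLt⟩ : ℕ) % N
              = (v ⟨(lo:ℕ)+(j':ℕ), hmemIdx j' j'.isLt⟩ : ℕ) := by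
          refine ⟨N * c, ?_, ?_⟩
          · rw [← hb1]; exact Nat.div_add_mod _ N
          · rw [← hb2]; exact Nat.div_add_mod _ N
        omega
      · intro j j' hjj
        have hcons : ((⟨(lo:ℕ)+(j:ℕ), hmemIdx j j.isLt⟩ : Fin ℓ) : ℕ) + 1
            = ((⟨(lo:ℕ)+(j':ℕ), hmemIdx j' j'.isLt⟩ : Fin ℓ) : ℕ) := by
          simp only []; omega
        have := hc _ _ hcons
        have hb1 := hBmid j j.isLt
        have hb2 := hBmid j' j'.isLt
        simp only [hB] at hb1 hb2
        rw [if_pos (by rw [hb1, hb2])] at this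
        exact this
  -- Step 2: the number of distinct blocks is ≤ a
  have hDcard : D.card ≤ a := by
    set s := D.card with hs
    refine le_maxMonoLen (q := q) (r := r) hS ?_
    set u : Fin s ≃o {x // x ∈ D} := D.orderIsoOfFin rfl with hu
    have humem : ∀ p : Fin s, ∃ i : Fin ℓ, B i = (u p : ℕ) := by
      intro p
      have hmem : (u p : ℕ) ∈ Finset.image B Finset.univ := (u p).2
      obtain ⟨i, -, hi⟩ := Finset.mem_image.mp hmem
      exact ⟨i, hi⟩
    have hum : ∀ p : Fin s, (u p : ℕ) < M := by
      intro p
      obtain ⟨i, hi⟩ := humem p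
      rw [← hi, hB]
      exact hdiv (v i)
    refine ⟨fun p => ⟨(u p : ℕ), hum p⟩, ?_, ?_⟩
    · intro p p' hpp
      simp only [Fin.lt_def]
      exact u.strictMono hpp
    · intro p p' hpp
      -- find consecutive vertices crossing from block (u p) to block (u p')
      have hplt : p < p' := by rw [Fin.lt_def]; omega
      have hclt : (u p : ℕ) < (u p' : ℕ) := u.strictMono hplt
      set F := Finset.univ.filter (fun i => B i = (u p : ℕ)) with hF
      have hFne : F.Nonempty := by
        obtain ⟨i, hi⟩ := humem p
        exact ⟨i, by simp [hF, hi]⟩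
      set i := F.max' hFne with hi
      have hBi : B i = (u p : ℕ) := by
        have := F.max'_mem hFne
        simpa [hF] using this
      obtain ⟨j, hj⟩ := humem p'
      have hij : i < j := by
        by_contra hle
        push_neg at hle
        have := hBmono hle
        omega
      have hi1lt : (i:ℕ) + 1 < ℓ := by
        have := j.isLt
        have : (i:ℕ) < (j:ℕ) := hij
        omega
      set i' : Fin ℓ := ⟨(i:ℕ)+1, hi1lt⟩ with hi'
      have hii' : i < i' := by simp [hi', Fin.lt_def]
      have hi'j : i' ≤ j := by
        simp only [hi', Fin.le_def]
        exact hij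
      have hBi'ge : (u p : ℕ) ≤ B i' := hBi ▸ hBmono hii'.le
      have hBi'ne : B i' ≠ (u p : ℕ) := by
        intro hcontra
        have : i' ∈ F := by simp [hF, hcontra]
        have := F.le_max' i' this
        rw [← hi] at this
        exact absurd this (not_le.mpr hii')
      have hBi'le : B i' ≤ (u p' : ℕ) := hj ▸ hBmono hi'j
      have hBi'D : B i' ∈ D := by simp [hD]
      obtain ⟨t, ht⟩ := u.surjective ⟨B i', hBi'D⟩
      have htv : (u t : ℕ) = B i' := by rw [ht]
      have hpt : p < t := u.lt_iff_lt.mp (Subtype.coe_lt_coe.mp (by omega))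
      have htp' : t ≤ p' := u.le_iff_le.mp (Subtype.coe_le_coe.mp (by omega))
      have hteq : t = p' := by
        apply le_antisymm htp'
        rw [Fin.le_def]
        have h1 : (p : ℕ) < (t : ℕ) := hpt
        omega
      have hBi'' : B i' = (u p' : ℕ) := by rw [← htv, hteq]
      have hcolor := hc i i' rfl
      rw [if_neg (show ¬((v i : ℕ)/N = (v i' : ℕ)/N) by
        change ¬(B i = B i'); omega)] at hcolor
      have e1 : (⟨(v i : ℕ)/N, hdiv (v i)⟩ : Fin M) = ⟨(u p : ℕ), hum p⟩ :=
        Fin.ext (by exact hBi)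
      have e2 : (⟨(v i' : ℕ)/N, hdiv (v i')⟩ : Fin M) = ⟨(u p' : ℕ), hum p'⟩ :=
        Fin.ext (by exact hBi'')
      rw [e1, e2] at hcolor
      exact hcolor
  -- Step 3: count
  have hcount : ℓ = ∑ c ∈ D, (Finset.univ.filter (fun i => B i = c)).card := by
    have := Finset.card_eq_sum_card_fiberwise
      (s := (Finset.univ : Finset (Fin ℓ))) (t := D) (f := B)
      (fun x _ => Finset.mem_image_of_mem B (Finset.mem_univ x))
    simpa using this
  calc ℓ = ∑ c ∈ D, (Finset.univ.filter (fun i => B i = c)).card := hcount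
    _ ≤ ∑ _c ∈ D, b := Finset.sum_le_sum (fun c _ => fiber_card c)
    _ = D.card * b := by rw [Finset.sum_const, smul_eq_mul]
    _ ≤ a * b := Nat.mul_le_mul_right _ hDcard

lemma fqr_submul (q r M N : ℕ) (hq : 0 < q) :
    fqr q r (M * N) ≤ fqr q r M * fqr q r N := by
  rcases Nat.eq_zero_or_pos N with hN | hN
  · subst hN
    rw [Nat.mul_zero]
    calc fqr q r 0 ≤ 0 := fqr_le_self q r 0 hq
      _ ≤ _ := Nat.zero_le _
  obtain ⟨χM, hχM⟩ := fqr_spec q r M hq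
  obtain ⟨χN, hχN⟩ := fqr_spec q r N hq
  obtain ⟨χ, hχ⟩ := key q r M N hN χM χN
  rw [hχM, hχN]
  exact (fqr_le q r (M*N) χ).trans hχ

lemma fqr_pow (q r M : ℕ) (hq : 0 < q) (k : ℕ) : fqr q r (M ^ k) ≤ (fqr q r M) ^ k := by
  induction k with
  | zero => simpa using fqr_le_self q r 1 hq
  | succ k ih =>
      rw [pow_succ, pow_succ]
      exact (fqr_submul q r (M^k) M hq).trans (Nat.mul_le_mul_right _ ih)

open Filter in
/-- For every `q > r ≥ 1`, there is `α ∈ [0,1]` with `log₂ f_{q,r}(N) / log₂ N → α`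
as `N → ∞`; that is, `f_{q,r}(N) = N^{α + o(1)}`. -/
theorem stmt_11 (q r : ℕ) (hr : 1 ≤ r) (hq : r < q) :
    ∃ α : ℝ, α ∈ Set.Icc (0 : ℝ) 1 ∧
      Tendsto (fun N : ℕ => Real.logb 2 (fqr q r N) / Real.logb 2 N) atTop (nhds α) := by
  have hq0 : 0 < q := by omega
  have h12 : (1 : ℝ) < 2 := one_lt_two
  set g : ℕ → ℝ := fun N => Real.logb 2 (fqr q r N) / Real.logb 2 N with hg
  -- basic bounds on g
  have hg01 : ∀ N : ℕ, 2 ≤ N → 0 ≤ g N ∧ g N ≤ 1 := by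
    intro N hN
    have hf1 : 1 ≤ fqr q r N := one_le_fqr hq0 (by omega)
    have hfN : fqr q r N ≤ N := fqr_le_self q r N hq0
    have hnum : 0 ≤ Real.logb 2 (fqr q r N) :=
      Real.logb_nonneg h12 (by exact_mod_cast hf1)
    have hden : 0 < Real.logb 2 N :=
      Real.logb_pos h12 (by exact_mod_cast hN)
    constructor
    · exact div_nonneg hnum hden.le
    · rw [div_le_one hden]
      exact Real.logb_le_logb_of_le h12 (by exact_mod_cast hf1) (by exact_mod_cast hfN)
  set A : Set ℝ := g '' {N : ℕ | 2 ≤ N} with hA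
  have hAne : A.Nonempty := ⟨g 2, 2, (by norm_num : 2 ∈ {N : ℕ | 2 ≤ N}), rfl⟩
  have hAbdd : BddBelow A := by
    refine ⟨0, ?_⟩
    rintro x ⟨N, hN, rfl⟩
    exact (hg01 N hN).1
  set α := sInf A with hα
  have hα0 : 0 ≤ α := le_csInf hAne (by rintro x ⟨N, hN, rfl⟩; exact (hg01 N hN).1)
  have hα1 : α ≤ 1 := (csInf_le hAbdd ⟨2, (by norm_num : 2 ∈ {N : ℕ | 2 ≤ N}), rfl⟩).trans (hg01 2 (le_refl 2)).2
  have hαle : ∀ N : ℕ, 2 ≤ N → α ≤ g N := fun N hN => csInf_le hAbdd ⟨N, hN, rfl⟩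
  refine ⟨α, ⟨hα0, hα1⟩, ?_⟩
  rw [Metric.tendsto_atTop]
  intro ε hε
  -- pick a good M
  obtain ⟨x, ⟨M, hM2, rfl⟩, hx⟩ :=
    exists_lt_of_csInf_lt hAne (show sInf A < α + ε/2 by rw [← hα]; linarith)
  -- pick k0
  obtain ⟨k0, hk0⟩ := exists_nat_gt (2/ε)
  have hk0pos : 0 < k0 := by
    by_contra hcon
    push_neg at hcon
    interval_cases k0
    simp only [Nat.cast_zero] at hk0
    have : (0:ℝ) < 2/ε := by positivity
    linarith
  have h1k0 : (1:ℝ)/k0 < ε/2 := by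
    rw [div_lt_div_iff₀ (by exact_mod_cast hk0pos) (by norm_num : (0:ℝ) < 2)]
    have h2ε : 2/ε < (k0:ℝ) := hk0
    rw [div_lt_iff₀ hε] at h2ε
    linarith
  refine ⟨M ^ k0, ?_⟩
  intro n hn
  have hM1 : 1 < M := hM2
  have hn2 : 2 ≤ n := le_trans (by calc 2 ≤ M := hM2
    _ = M^1 := (pow_one M).symm
    _ ≤ M^k0 := Nat.pow_le_pow_right (by omega) hk0pos) hn
  have hn0 : n ≠ 0 := by omega
  set k := Nat.log M n with hk
  have hkn : M ^ k ≤ n := Nat.pow_log_le_self M hn0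
  have hnk : n < M ^ (k+1) := Nat.lt_pow_succ_log_self hM1 n
  have hk0k : k0 ≤ k := (Nat.le_log_iff_pow_le hM1 hn0).mpr hn
  have hkpos : 0 < k := lt_of_lt_of_le hk0pos hk0k
  -- main bound
  have hfle : fqr q r n ≤ (fqr q r M) ^ (k+1) :=
    le_trans (fqr_mono q r hq0 hnk.le) (fqr_pow q r M hq0 (k+1))
  set LM := Real.logb 2 (fqr q r M) with hLM
  set DM := Real.logb 2 M with hDM
  have hDMpos : 0 < DM := Real.logb_pos h12 (by exact_mod_cast hM2)
  have hLMnn : 0 ≤ LM := Real.logb_nonneg h12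
    (by exact_mod_cast one_le_fqr hq0 (by omega : 1 ≤ M))
  have hnum : Real.logb 2 (fqr q r n) ≤ (k+1) * LM := by
    calc Real.logb 2 (fqr q r n) ≤ Real.logb 2 ((fqr q r M : ℝ) ^ (k+1)) := by
          apply Real.logb_le_logb_of_le h12
          · exact_mod_cast one_le_fqr hq0 (by omega : 1 ≤ n)
          · exact_mod_cast hfle
      _ = (k+1) * LM := by rw [Real.logb_pow]; push_cast; ring
  have hden : (k:ℝ) * DM ≤ Real.logb 2 n := by
    calc (k:ℝ) * DM = Real.logb 2 ((M:ℝ) ^ k) := by rw [Real.logb_pow]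
      _ ≤ Real.logb 2 n := by
          apply Real.logb_le_logb_of_le h12
          · positivity
          · exact_mod_cast hkn
  have hkDpos : 0 < (k:ℝ) * DM := by positivity
  have hnn : 0 ≤ Real.logb 2 (fqr q r n) :=
    Real.logb_nonneg h12 (by exact_mod_cast one_le_fqr hq0 (by omega : 1 ≤ n))
  have hgn_ub : g n ≤ ((k:ℝ)+1) * LM / ((k:ℝ) * DM) := by
    apply div_le_div₀ (by positivity) hnum hkDpos hden
  have heq : ((k:ℝ)+1) * LM / ((k:ℝ) * DM) = LM/DM + (LM/DM)/k := by
    field_simp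
  have hgM : g M = LM / DM := rfl
  have hstep : (LM/DM)/(k:ℝ) ≤ 1/(k0:ℝ) := by
    have h1 : LM/DM ≤ 1 := (hg01 M hM2).2
    exact div_le_div₀ (by norm_num) h1 (by exact_mod_cast hk0pos) (by exact_mod_cast hk0k)
  have hgnα : α ≤ g n := hαle n hn2
  have hub : g n < α + ε := by
    have : g n ≤ LM/DM + 1/(k0:ℝ) := by
      rw [hg] at hgn_ub ⊢
      calc Real.logb 2 (fqr q r n) / Real.logb 2 n ≤ ((k:ℝ)+1) * LM / ((k:ℝ) * DM) := hgn_ub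
        _ = LM/DM + (LM/DM)/k := heq
        _ ≤ LM/DM + 1/(k0:ℝ) := by linarith
    have hgM' : g M < α + ε/2 := hx
    rw [hgM] at hgM'
    linarith
  rw [Real.dist_eq, abs_lt]
  constructor <;> linarith
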